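/- For every integer d ≥ 0, the set △_d equals φ₁^d φ₀(△̄ ∖ Σ), the image of △̄ ∖ Σ under d applications of φ₁ following one application of φ₀. -/

import Mathlib

noncomputable def phi0 (p : ℝ × ℝ) : ℝ × ℝ := (1 / (1 + p.2), p.1 / (1 + p.2))
noncomputable def phi1 (p : ℝ × ℝ) : ℝ × ℝ := (p.1 / (1 + p.2), p.2 / (1 + p.2))

/-- The open triangle △ = {(x,y) : 1 ≥ x ≥ y > 0}. -/
def tri : Set (ℝ × ℝ) := {p | 1 ≥ p.1 ∧ p.1 ≥ p.2 ∧ p.2 > 0}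

/-- The subtriangle △_d. -/
def triK (d : ℕ) : Set (ℝ × ℝ) :=
  {p | p ∈ tri ∧ 1 - p.1 - (d : ℝ) * p.2 ≥ 0 ∧ 1 - p.1 - ((d : ℝ) + 1) * p.2 < 0}

/-- Σ = △̄ ∩ {x = y}. -/
def SigmaSet : Set (ℝ × ℝ) := closure tri ∩ {p | p.1 = p.2}

lemma closure_tri_eq :
    closure tri = {p : ℝ × ℝ | p.1 ≤ 1 ∧ p.2 ≤ p.1 ∧ 0 ≤ p.2} := by
  apply subset_antisymm
  · apply closure_minimal
    · intro p hp
      exact ⟨hp.1, hp.2.1, le_of_lt hp.2.2⟩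
    · exact ((isClosed_le continuous_fst continuous_const).inter
        ((isClosed_le continuous_snd continuous_fst).inter
          (isClosed_le continuous_const continuous_snd)))
  · rintro ⟨x, y⟩ ⟨hx1, hyx, hy0⟩
    simp only at hx1 hyx hy0
    have key : Filter.Tendsto (fun n : ℕ =>
        ((x + (1 - x) * (1 / (n + 1)) : ℝ), (y + (1 - y) * (1 / (n + 1)) : ℝ)))
        Filter.atTop (nhds (x, y)) := by
      have ht : Filter.Tendsto (fun n : ℕ => (1 : ℝ) / (n + 1)) Filter.atTop (nhds 0) :=
        tendsto_one_div_add_atTop_nhds_zero_nat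
      have h1 := ((ht.const_mul (1 - x)).const_add x)
      have h2 := ((ht.const_mul (1 - y)).const_add y)
      simp only [mul_zero, add_zero] at h1 h2
      exact h1.prodMk_nhds h2
    refine mem_closure_of_tendsto key ?_
    filter_upwards with n
    have h0 : (0 : ℝ) < 1 / (n + 1) := by positivity
    have hle : (1 : ℝ) / (n + 1) ≤ 1 := by
      rw [div_le_one (by positivity)]; linarith [Nat.cast_nonneg (α := ℝ) n]
    refine ⟨by nlinarith, by nlinarith, by nlinarith⟩

lemma domain_eq :
    closure tri \ SigmaSet = {p : ℝ × ℝ | p.1 ≤ 1 ∧ p.2 < p.1 ∧ 0 ≤ p.2} := by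
  ext ⟨x, y⟩
  simp only [SigmaSet, Set.mem_diff, Set.mem_inter_iff, Set.mem_setOf_eq, closure_tri_eq,
    not_and]
  constructor
  · rintro ⟨⟨h1, h2, h3⟩, h4⟩
    refine ⟨h1, lt_of_le_of_ne h2 ?_, h3⟩
    intro h
    exact h4 ⟨h1, h2, h3⟩ h.symm
  · rintro ⟨h1, h2, h3⟩
    exact ⟨⟨h1, le_of_lt h2, h3⟩, fun _ h => absurd h (ne_of_gt h2)⟩

lemma step0 : triK 0 = phi0 '' (closure tri \ SigmaSet) := by
  rw [domain_eq]
  ext ⟨X, Y⟩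
  simp only [triK, tri, phi0, Set.mem_setOf_eq, Set.mem_image, Prod.mk.injEq, Prod.exists,
    Nat.cast_zero, ge_iff_le, gt_iff_lt]
  constructor
  · rintro ⟨⟨h1, h2, h3⟩, h4, h5⟩
    have hX : 0 < X := lt_of_lt_of_le h3 h2
    refine ⟨Y / X, (1 - X) / X, ⟨?_, ?_, ?_⟩, ?_, ?_⟩
    · rw [div_le_one hX]; exact h2
    · rw [div_lt_div_iff₀ hX hX]; nlinarith
    · exact div_nonneg (by linarith) (le_of_lt hX)
    · rw [show 1 + (1 - X) / X = 1 / X by field_simp; ring]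
      simp
    · rw [show 1 + (1 - X) / X = 1 / X by field_simp; ring]
      field_simp
  · rintro ⟨x, y, ⟨h1, h2, h3⟩, hX, hY⟩
    have hy : (0 : ℝ) < 1 + y := by linarith
    subst hX hY
    refine ⟨⟨?_, ?_, ?_⟩, ?_, ?_⟩
    · rw [div_le_one hy]; linarith
    · rw [div_le_div_iff₀ hy hy]; nlinarith
    · have hx : 0 < x := lt_of_le_of_lt h3 h2
      positivity
    · rw [show 1 - 1 / (1 + y) - 0 * (x / (1 + y)) = y / (1 + y) by field_simp; ring]
      positivity
    · rw [show 1 - 1 / (1 + y) - (0 + 1) * (x / (1 + y)) = (y - x) / (1 + y) by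
        field_simp <;> ring]
      exact div_neg_of_neg_of_pos (by linarith) hy

lemma step1 (d : ℕ) : triK (d + 1) = phi1 '' triK d := by
  ext ⟨X, Y⟩
  simp only [triK, tri, phi1, Set.mem_setOf_eq, Set.mem_image, Prod.mk.injEq, Prod.exists,
    ge_iff_le, gt_iff_lt]
  push_cast
  have hd : (0 : ℝ) ≤ d := Nat.cast_nonneg d
  constructor
  · rintro ⟨⟨h1, h2, h3⟩, h4, h5⟩
    have hY1 : Y < 1 := by nlinarith
    have hY1' : (0 : ℝ) < 1 - Y := by linarith
    refine ⟨X / (1 - Y), Y / (1 - Y), ⟨⟨?_, ?_, ?_⟩, ?_, ?_⟩, ?_, ?_⟩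
    · rw [div_le_one hY1']; nlinarith
    · rw [div_le_div_iff₀ hY1' hY1']; nlinarith
    · positivity
    · rw [show 1 - X / (1 - Y) - (d : ℝ) * (Y / (1 - Y))
          = (1 - X - ((d : ℝ) + 1) * Y) / (1 - Y) by field_simp <;> ring]
      exact div_nonneg (by linarith) (le_of_lt hY1')
    · rw [show 1 - X / (1 - Y) - ((d : ℝ) + 1) * (Y / (1 - Y))
          = (1 - X - ((d : ℝ) + 1 + 1) * Y) / (1 - Y) by field_simp <;> ring]
      exact div_neg_of_neg_of_pos (by linarith) hY1'
    · rw [show 1 + Y / (1 - Y) = 1 / (1 - Y) by field_simp; ring]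
      field_simp
    · rw [show 1 + Y / (1 - Y) = 1 / (1 - Y) by field_simp; ring]
      field_simp
  · rintro ⟨x, y, ⟨⟨h1, h2, h3⟩, h4, h5⟩, hX, hY⟩
    have hy : (0 : ℝ) < 1 + y := by linarith
    subst hX hY
    refine ⟨⟨?_, ?_, ?_⟩, ?_, ?_⟩
    · rw [div_le_one hy]; linarith
    · rw [div_le_div_iff₀ hy hy]; nlinarith
    · positivity
    · rw [show 1 - x / (1 + y) - ((d : ℝ) + 1) * (y / (1 + y))
          = (1 - x - (d : ℝ) * y) / (1 + y) by field_simp <;> ring]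
      exact div_nonneg (by linarith) (le_of_lt hy)
    · rw [show 1 - x / (1 + y) - ((d : ℝ) + 1 + 1) * (y / (1 + y))
          = (1 - x - ((d : ℝ) + 1) * y) / (1 + y) by field_simp <;> ring]
      exact div_neg_of_neg_of_pos (by linarith) hy

/-- △_d = φ₁^d φ₀ (△̄ ∖ Σ) for every integer d ≥ 0. -/
theorem triK_eq_image (d : ℕ) :
    triK d = (phi1^[d] ∘ phi0) '' (closure tri \ SigmaSet) := by
  induction d with
  | zero => simpa using step0
  | succ d ih =>
    rw [step1, ih, ← Set.image_comp, Function.iterate_succ']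
    rfl
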